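/- Let K be a convex body in ℝ^n, and suppose p ∈ conv_K X (the intersection of all translates of K containing X) but p ∉ conv_K X' for every proper subset X' ⊂ X, where X ⊆ K is finite. Then for each x ∈ X there exists an outer normal a of K such that ⟨a, x⟩ ≥ ⟨a, p⟩ and ⟨a, x⟩ > ⟨a, y⟩ for every y ∈ X \ {x}. -/

import Mathlib

local notation "⟪" x ", " y "⟫_ℝ" => @inner ℝ _ _ x y

/-- The `K`-strongly convex hull of `X`: the intersection of all translates of `K`
containing `X`. -/
def convK {n : ℕ} (K X : Set (EuclideanSpace ℝ (Fin n))) : Set (EuclideanSpace ℝ (Fin n)) :=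
  ⋂₀ {S | (∃ t : EuclideanSpace ℝ (Fin n), S = (fun y => t + y) '' K) ∧ X ⊆ S}

private lemma memt {n : ℕ} {K : Set (EuclideanSpace ℝ (Fin n))}
    {t z : EuclideanSpace ℝ (Fin n)} :
    z ∈ (fun y => t + y) '' K ↔ z - t ∈ K := by
  constructor
  · rintro ⟨k, hk, rfl⟩
    simpa using hk
  · intro h
    exact ⟨z - t, h, by show t + (z - t) = z; rw [add_comm]; exact sub_add_cancel z t⟩

private lemma core {n : ℕ} {K : Set (EuclideanSpace ℝ (Fin n))}
    (hKcl : IsClosed K) (hKconv : Convex ℝ K)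
    {X : Finset (EuclideanSpace ℝ (Fin n))} [DecidableEq (EuclideanSpace ℝ (Fin n))]
    (hXK : ↑X ⊆ K)
    {p x : EuclideanSpace ℝ (Fin n)} (hx : x ∈ X)
    (hp : p ∈ convK K ↑X)
    {t0 : EuclideanSpace ℝ (Fin n)}
    (hsub : ↑(X.erase x) ⊆ (fun y => t0 + y) '' K)
    (hpt0 : p ∉ (fun y => t0 + y) '' K)
    {β : ℝ} (hβ0 : 0 ≤ β) (hβ1 : β < 1)
    {z : EuclideanSpace ℝ (Fin n)} (hzK : z ∈ K) (hzt0 : z - t0 ∈ K)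
    (hxe : x = β • p + (1 - β) • z) : False := by
  have hpK : p ∈ K := by
    have := Set.mem_sInter.1 hp K ⟨⟨0, by simp⟩, hXK⟩
    exact this
  have hxK : x ∈ K := hXK hx
  -- the set of sliding parameters for which x is in the translate
  set S : Set ℝ := {s | s ∈ Set.Icc (0 : ℝ) 1 ∧ x - (1 - s) • t0 ∈ K} with hS
  have h1S : (1 : ℝ) ∈ S := by
    constructor
    · exact ⟨zero_le_one, le_refl 1⟩
    · simpa using hxK
  have hScl : IsClosed S := by
    have : S = Set.Icc (0:ℝ) 1 ∩ (fun s : ℝ => x - (1 - s) • t0) ⁻¹' K := rfl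
    rw [this]
    exact isClosed_Icc.inter (hKcl.preimage (continuous_const.sub ((continuous_const.sub continuous_id).smul continuous_const)))
  have hSbdd : BddBelow S := ⟨0, fun s hs => hs.1.1⟩
  set s₀ : ℝ := sInf S with hs₀def
  have hs₀S : s₀ ∈ S := hScl.csInf_mem ⟨1, h1S⟩ hSbdd
  -- 0 is not in S
  have h0S : (0 : ℝ) ∉ S := by
    intro h0
    have hxt0 : x - t0 ∈ K := by simpa using h0.2
    have hXsub : ↑X ⊆ (fun y => t0 + y) '' K := by
      intro y hy
      rcases eq_or_ne y x with rfl | hne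
      · exact memt.2 hxt0
      · exact hsub (by simpa [Finset.mem_erase] using And.intro hy hne)
    exact hpt0 (Set.mem_sInter.1 hp _ ⟨⟨t0, rfl⟩, hXsub⟩)
  have hs₀pos : 0 < s₀ := lt_of_le_of_ne hs₀S.1.1 (fun h => h0S (h ▸ hs₀S))
  -- every convex combination trick: points of K ∩ (t0+K) stay in all intermediate translates
  have htrans : ∀ s : ℝ, 0 ≤ s → s ≤ 1 → ∀ y, y ∈ K → y - t0 ∈ K → y - (1 - s) • t0 ∈ K := by
    intro s hs0 hs1 y hyK hyt0
    have hmem := hKconv hyK hyt0 hs0 (show (0:ℝ) ≤ 1 - s by linarith)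
      (show s + (1 - s) = 1 by ring)
    have heq : s • y + (1 - s) • (y - t0) = y - (1 - s) • t0 := by module
    rwa [heq] at hmem
  -- p is in the translate at time s₀
  have hps₀ : p - (1 - s₀) • t0 ∈ K := by
    have hXsub : ↑X ⊆ (fun y => (1 - s₀) • t0 + y) '' K := by
      intro y hy
      rcases eq_or_ne y x with rfl | hne
      · exact memt.2 hs₀S.2
      · have hyt : y ∈ (fun y => t0 + y) '' K :=
          hsub (by simpa [Finset.mem_erase] using And.intro hy hne)
        exact memt.2 (htrans s₀ hs₀S.1.1 hs₀S.1.2 y (hXK hy) (memt.1 hyt))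
    exact memt.1 (Set.mem_sInter.1 hp _ ⟨⟨(1 - s₀) • t0, rfl⟩, hXsub⟩)
  -- the key contradiction: β * s₀ ∈ S but β * s₀ < s₀ = sInf S
  have hkey : β * s₀ ∈ S := by
    constructor
    · constructor
      · exact mul_nonneg hβ0 hs₀S.1.1
      · nlinarith [hs₀S.1.2, hs₀S.1.1]
    · have hcomb := hKconv hps₀ hzt0 hβ0 (show (0:ℝ) ≤ 1 - β by linarith)
        (show β + (1 - β) = 1 by ring)
      have heq : β • (p - (1 - s₀) • t0) + (1 - β) • (z - t0)
          = x - (1 - β * s₀) • t0 := by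
        rw [hxe]; module
      rwa [heq] at hcomb
  have : s₀ ≤ β * s₀ := csInf_le hSbdd hkey
  nlinarith

theorem stmt9 {n : ℕ} [DecidableEq (EuclideanSpace ℝ (Fin n))] (K : Set (EuclideanSpace ℝ (Fin n)))
    (hKcomp : IsCompact K) (hKconv : Convex ℝ K) (hKint : (interior K).Nonempty)
    (X : Finset (EuclideanSpace ℝ (Fin n))) (hXK : ↑X ⊆ K)
    (p : EuclideanSpace ℝ (Fin n)) (hp : p ∈ convK K ↑X)
    (hmin : ∀ x ∈ X, p ∉ convK K ↑(X.erase x)) :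
    ∀ x ∈ X, ∃ a : EuclideanSpace ℝ (Fin n), a ≠ 0 ∧
      (∃ z ∈ K, ∀ y ∈ K, ⟪a, y⟫_ℝ ≤ ⟪a, z⟫_ℝ) ∧
      ⟪a, p⟫_ℝ ≤ ⟪a, x⟫_ℝ ∧
      ∀ y ∈ X, y ≠ x → ⟪a, y⟫_ℝ < ⟪a, x⟫_ℝ := by
  intro x hx
  obtain ⟨c, hc⟩ := hKint
  have hcK : c ∈ K := interior_subset hc
  have hKcl : IsClosed K := hKcomp.isClosed
  have hpK : p ∈ K := Set.mem_sInter.1 hp K ⟨⟨0, by simp⟩, hXK⟩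
  -- extract the translate witnessing minimality
  have hmx := hmin x hx
  rw [convK, Set.mem_sInter] at hmx
  push_neg at hmx
  obtain ⟨S, ⟨⟨t0, rfl⟩, hsub⟩, hpS⟩ := hmx
  -- a maximizer on K exists for any a
  have hmax : ∀ a : EuclideanSpace ℝ (Fin n), ∃ z ∈ K, ∀ y ∈ K, ⟪a, y⟫_ℝ ≤ ⟪a, z⟫_ℝ := by
    intro a
    have hcont : ContinuousOn (fun y => ⟪a, y⟫_ℝ) K :=
      (Continuous.inner continuous_const continuous_id).continuousOn
    obtain ⟨zmax, hzmem, hzmax⟩ := hKcomp.exists_isMaxOn ⟨c, hcK⟩ hcont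
    exact ⟨zmax, hzmem, fun y hy => hzmax hy⟩
  -- the space is nontrivial (otherwise p ∈ t0 + K trivially)
  have hnontriv : ∃ u : EuclideanSpace ℝ (Fin n), u ≠ 0 := by
    by_contra hcon
    push_neg at hcon
    apply hpS
    rw [hcon t0]
    simpa using hpK
  -- convex hull facts
  set T : Set (EuclideanSpace ℝ (Fin n)) := convexHull ℝ ↑(X.erase x) with hTdef
  have hTK : T ⊆ K := convexHull_min (Set.Subset.trans (by exact_mod_cast Finset.erase_subset x X) hXK) hKconv
  have hTt0 : T ⊆ (fun y => t0 + y) '' K := convexHull_min hsub (hKconv.translate t0)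
  set W : Set (EuclideanSpace ℝ (Fin n)) := convexHull ℝ (insert p ↑(X.erase x)) with hWdef
  -- separation helper: separate x strictly from a closed convex set containing given points
  by_cases hxW : x ∈ W
  · -- x is a convex combination: x = u • p + v • z with z ∈ T
    rcases Finset.eq_empty_or_nonempty (X.erase x) with herase | ⟨z0, hz0⟩
    · -- X.erase x empty : W = {p}, so x = p; any nonzero a works
      have hxp : x = p := by
        rw [hWdef, herase] at hxW
        simpa [convexHull_singleton] using hxW
      obtain ⟨u, hu⟩ := hnontriv
      refine ⟨u, hu, hmax u, le_of_eq (by rw [hxp]), ?_⟩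
      intro y hy hne
      exact absurd (Finset.mem_erase.2 ⟨hne, hy⟩) (by rw [herase]; simp)
    · have hTne : (↑(X.erase x) : Set (EuclideanSpace ℝ (Fin n))).Nonempty := ⟨z0, by exact_mod_cast hz0⟩
      rw [hWdef, convexHull_insert hTne] at hxW
      rw [mem_convexJoin] at hxW
      obtain ⟨q, hq, z, hzT, hxseg⟩ := hxW
      rw [Set.mem_singleton_iff] at hq
      rw [hq] at hxseg
      obtain ⟨u, v, hu0, hv0, huv, hxe⟩ := hxseg
      have hzK : z ∈ K := hTK hzT
      have hzt0 : z - t0 ∈ K := memt.1 (hTt0 hzT)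
      by_cases hu1 : u < 1
      · exfalso
        refine core hKcl hKconv hXK hx hp hsub hpS hu0 hu1 hzK hzt0 ?_
        have hv : v = 1 - u := by linarith
        rw [← hxe, hv]
      · -- u = 1, so x = p
        have hueq : u = 1 := le_antisymm (by linarith) (not_lt.1 hu1)
        have hveq : v = 0 := by linarith
        have hxp : x = p := by rw [← hxe, hueq, hveq]; simp
        by_cases hxT : x ∈ T
        · exfalso
          refine core hKcl hKconv hXK hx hp hsub hpS (le_refl (0:ℝ)) one_pos (hTK hxT)
            (memt.1 (hTt0 hxT)) ?_
          simp
        · -- separate x strictly from T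
          have hTcl : IsClosed T := (X.erase x).finite_toSet.isClosed_convexHull (𝕜 := ℝ)
          obtain ⟨f, r, hfb, hfx⟩ :=
            geometric_hahn_banach_closed_point (convex_convexHull ℝ _) hTcl hxT
          set a : EuclideanSpace ℝ (Fin n) := (InnerProductSpace.toDual ℝ _).symm f with ha
          have hinner : ∀ y, ⟪a, y⟫_ℝ = f y := fun y => InnerProductSpace.toDual_symm_apply
          have hz0T : (z0 : EuclideanSpace ℝ (Fin n)) ∈ T := subset_convexHull ℝ _ (by exact_mod_cast hz0)
          have hane : a ≠ 0 := by
            intro h0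
            have h1 : f z0 < f x := lt_trans (hfb z0 hz0T) hfx
            rw [← hinner, ← hinner, h0] at h1
            simp at h1
          refine ⟨a, hane, hmax a, le_of_eq (by rw [hxp]), ?_⟩
          intro y hy hne
          have hyT : y ∈ T := subset_convexHull ℝ _ (by exact_mod_cast Finset.mem_erase.2 ⟨hne, hy⟩)
          rw [hinner, hinner]
          exact lt_trans (hfb y hyT) hfx
  · -- x ∉ W : separate x strictly from W
    have hWcl : IsClosed W := (Set.Finite.insert p (X.erase x).finite_toSet).isClosed_convexHull (𝕜 := ℝ)
    obtain ⟨f, r, hfb, hfx⟩ :=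
      geometric_hahn_banach_closed_point (convex_convexHull ℝ _) hWcl hxW
    set a : EuclideanSpace ℝ (Fin n) := (InnerProductSpace.toDual ℝ _).symm f with ha
    have hinner : ∀ y, ⟪a, y⟫_ℝ = f y := fun y => InnerProductSpace.toDual_symm_apply
    have hpW : p ∈ W := subset_convexHull ℝ _ (Set.mem_insert p _)
    have hane : a ≠ 0 := by
      intro h0
      have h1 : f p < f x := lt_trans (hfb p hpW) hfx
      rw [← hinner, ← hinner, h0] at h1
      simp at h1
    refine ⟨a, hane, hmax a, ?_, ?_⟩
    · rw [hinner, hinner]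
      exact le_of_lt (lt_trans (hfb p hpW) hfx)
    · intro y hy hne
      have hyW : y ∈ W := subset_convexHull ℝ _ (Set.mem_insert_of_mem p
        (by exact_mod_cast Finset.mem_erase.2 ⟨hne, hy⟩))
      rw [hinner, hinner]
      exact lt_trans (hfb y hyW) hfx
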